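/- Let m_1, ..., m_r be positive pairwise coprime natural numbers, u_1, ..., u_r integers, and suppose for all indices i < j there are integers c_{ij} with c_{ij}·m_i ≡ 1 (mod m_j). Define v_1, ..., v_r recursively by v_i = (((u_i − v_1)·c_{1i} − v_2)·c_{2i} − ... − v_{i−1})·c_{(i−1)i} mod m_i (i.e., starting from u_i, successively subtract v_j and multiply by c_{ji} for j = 1, ..., i−1, then reduce mod m_i). Then the integer u = v_r·m_{r−1}···m_2·m_1 + ... + v_3·m_2·m_1 + v_2·m_1 + v_1, i.e., u = ∑_i v_i·(m_1···m_{i−1}), satisfies 0 ≤ u < m_1···m_r and u ≡ u_i (mod m_i) for all i. This is Garner's algorithm for the Chinese Remainder Theorem. -/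

import Mathlib

private lemma garner_fold (r : ℕ) (m : Fin r → ℕ) (v : Fin r → ℤ)
    (c : Fin r → Fin r → ℤ) (i : Fin r) :
    ∀ (L : List (Fin r)) (a : ℤ),
      (∀ j ∈ L, (m i : ℤ) ∣ c j i * (m j : ℤ) - 1) →
      (m i : ℤ) ∣ (L.foldl (fun acc j => (acc - v j) * c j i) a) *
          (L.map (fun j => (m j : ℤ))).prod -
        (a - L.foldr (fun j acc => v j + (m j : ℤ) * acc) 0) := by
  intro L
  induction L with
  | nil => intro a _; simp
  | cons j L ih =>
    intro a hL
    simp only [List.foldl_cons, List.foldr_cons, List.map_cons, List.prod_cons]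
    have h1 := ih ((a - v j) * c j i) (fun k hk => hL k (List.mem_cons_of_mem _ hk))
    have h2 := hL j List.mem_cons_self
    have key : (L.foldl (fun acc j' => (acc - v j') * c j' i) ((a - v j) * c j i)) *
          ((m j : ℤ) * (L.map (fun j => (m j : ℤ))).prod) -
        (a - (v j + (m j : ℤ) * L.foldr (fun j acc => v j + (m j : ℤ) * acc) 0)) =
        (m j : ℤ) * ((L.foldl (fun acc j' => (acc - v j') * c j' i) ((a - v j) * c j i)) *
          (L.map (fun j => (m j : ℤ))).prod -
          ((a - v j) * c j i - L.foldr (fun j acc => v j + (m j : ℤ) * acc) 0)) +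
        (a - v j) * (c j i * (m j : ℤ) - 1) := by ring
    rw [key]
    exact dvd_add (Dvd.dvd.mul_left h1 _) (Dvd.dvd.mul_left h2 _)

private lemma garner_g (r : ℕ) (m : Fin r → ℕ) (v : Fin r → ℤ) :
    ∀ (L : List (Fin r)), L.Pairwise (· < ·) →
      L.foldr (fun j acc => v j + (m j : ℤ) * acc) 0 =
        ∑ k ∈ L.toFinset, v k * ∏ j ∈ L.toFinset.filter (· < k), (m j : ℤ) := by
  intro L
  induction L with
  | nil => simp
  | cons j L ih =>
    intro hp
    have hjl : ∀ k ∈ L, j < k := fun k hk => (List.pairwise_cons.1 hp).1 k hk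
    have hnd : j ∉ L.toFinset := by
      simp only [List.mem_toFinset]; intro h; exact absurd (hjl j h) (lt_irrefl j)
    simp only [List.foldr_cons, List.toFinset_cons]
    rw [Finset.sum_insert hnd]
    have e1 : (insert j L.toFinset).filter (· < j) = ∅ := by
      ext x
      simp only [Finset.mem_filter, Finset.mem_insert, Finset.notMem_empty, iff_false,
        List.mem_toFinset]
      rintro ⟨rfl | hx, hlt⟩
      · exact absurd hlt (lt_irrefl _)
      · exact absurd hlt (not_lt.2 (hjl x hx).le)
    have e2 : ∀ k ∈ L.toFinset, (insert j L.toFinset).filter (· < k) =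
        insert j (L.toFinset.filter (· < k)) := by
      intro k hk
      ext x
      simp only [Finset.mem_filter, Finset.mem_insert, List.mem_toFinset] at *
      constructor
      · rintro ⟨rfl | hx, hlt⟩
        · exact Or.inl rfl
        · exact Or.inr ⟨hx, hlt⟩
      · rintro (rfl | ⟨hx, hlt⟩)
        · exact ⟨Or.inl rfl, hjl k hk⟩
        · exact ⟨Or.inr hx, hlt⟩
    rw [e1]
    have e3 : ∑ k ∈ L.toFinset, v k * ∏ j' ∈ (insert j L.toFinset).filter (· < k), (m j' : ℤ) =
        (m j : ℤ) * ∑ k ∈ L.toFinset, v k * ∏ j' ∈ L.toFinset.filter (· < k), (m j' : ℤ) := by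
      rw [Finset.mul_sum]
      refine Finset.sum_congr rfl fun k hk => ?_
      rw [e2 k hk, Finset.prod_insert (by simp [hnd, Finset.mem_filter])]
      ring
    rw [e3, ih (List.pairwise_cons.1 hp).2]
    simp

private lemma garner_tele (a w : ℕ → ℤ) :
    ∀ n : ℕ, (∀ i < n, 1 ≤ a i) → (∀ i < n, 0 ≤ w i ∧ w i ≤ a i - 1) →
      ∑ i ∈ Finset.range n, w i * ∏ j ∈ Finset.range i, a j <
        ∏ j ∈ Finset.range n, a j := by
  intro n
  induction n with
  | zero => simp
  | succ n ih =>
    intro ha hw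
    rw [Finset.sum_range_succ, Finset.prod_range_succ]
    have hP : 0 ≤ ∏ j ∈ Finset.range n, a j :=
      Finset.prod_nonneg fun j hj =>
        le_trans zero_le_one (ha j ((Finset.mem_range.1 hj).trans (Nat.lt_succ_self n)))
    have h1 := ih (fun i hi => ha i (hi.trans (Nat.lt_succ_self n)))
      (fun i hi => hw i (hi.trans (Nat.lt_succ_self n)))
    have h2 : w n * ∏ j ∈ Finset.range n, a j ≤ (a n - 1) * ∏ j ∈ Finset.range n, a j :=
      mul_le_mul_of_nonneg_right (hw n (Nat.lt_succ_self n)).2 hP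
    nlinarith [h1, h2, hP]

theorem garner_algorithm (r : ℕ) (m : Fin r → ℕ) (hm : ∀ i, 0 < m i)
    (hcop : ∀ i j : Fin r, i ≠ j → Nat.Coprime (m i) (m j))
    (u : Fin r → ℤ) (c : Fin r → Fin r → ℤ)
    (hc : ∀ i j : Fin r, i < j → (m j : ℤ) ∣ (c i j * (m i : ℤ) - 1))
    (v : Fin r → ℤ)
    (hv : ∀ i : Fin r,
      v i = (((List.finRange r).filter (fun j => j < i)).foldl
              (fun acc j => (acc - v j) * c j i) (u i)) % (m i : ℤ)) :
    0 ≤ ∑ i, v i * ∏ j ∈ Finset.Iio i, (m j : ℤ) ∧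
      (∑ i, v i * ∏ j ∈ Finset.Iio i, (m j : ℤ)) < ∏ i, (m i : ℤ) ∧
      ∀ i : Fin r, (m i : ℤ) ∣ ((∑ i, v i * ∏ j ∈ Finset.Iio i, (m j : ℤ)) - u i) := by
  have hmne : ∀ i : Fin r, (m i : ℤ) ≠ 0 := fun i => by
    exact_mod_cast (hm i).ne'
  have hv0 : ∀ i : Fin r, 0 ≤ v i := fun i => by
    rw [hv i]; exact Int.emod_nonneg _ (hmne i)
  have hv1 : ∀ i : Fin r, v i < (m i : ℤ) := fun i => by
    rw [hv i]; exact Int.emod_lt_of_pos _ (by exact_mod_cast hm i)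
  refine ⟨?_, ?_, ?_⟩
  · refine Finset.sum_nonneg fun i _ => mul_nonneg (hv0 i) ?_
    exact Finset.prod_nonneg fun j _ => Int.natCast_nonneg _
  · -- upper bound
    set a : ℕ → ℤ := fun k => if h : k < r then (m ⟨k, h⟩ : ℤ) else 1 with ha
    set w : ℕ → ℤ := fun k => if h : k < r then v ⟨k, h⟩ else 0 with hwdef
    have hprod : ∀ i : Fin r, ∏ j ∈ Finset.Iio i, (m j : ℤ) =
        ∏ k ∈ Finset.range i.val, a k := by
      intro i
      rw [← Nat.Iio_eq_range, ← Fin.map_valEmbedding_Iio, Finset.prod_map]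
      refine Finset.prod_congr rfl fun j hj => ?_
      simp only [ha, Fin.valEmbedding_apply, j.isLt, dif_pos, Fin.eta]
    have key : (∑ i, v i * ∏ j ∈ Finset.Iio i, (m j : ℤ)) =
        ∑ k ∈ Finset.range r, w k * ∏ j ∈ Finset.range k, a j := by
      rw [← Fin.sum_univ_eq_sum_range (fun k => w k * ∏ j ∈ Finset.range k, a j) r]
      refine Finset.sum_congr rfl fun i _ => ?_
      rw [hprod i]
      congr 1
      simp [hwdef, i.isLt]
    have keyP : (∏ i, (m i : ℤ)) = ∏ k ∈ Finset.range r, a k := by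
      rw [← Fin.prod_univ_eq_prod_range (fun k => a k) r]
      refine Finset.prod_congr rfl fun i _ => ?_
      simp [ha, i.isLt]
    rw [key, keyP]
    refine garner_tele a w r (fun i hi => ?_) (fun i hi => ?_)
    · simp only [ha, dif_pos hi]
      exact_mod_cast hm ⟨i, hi⟩
    · simp only [hwdef, dif_pos hi]
      exact ⟨hv0 _, by have := hv1 ⟨i, hi⟩; simp only [ha, dif_pos hi]; omega⟩
  · -- congruences
    intro i
    set L : List (Fin r) := (List.finRange r).filter (fun j => j < i) with hL
    have hLp : L.Pairwise (· < ·) := (List.pairwise_lt_finRange r).filter _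
    have hLt : L.toFinset = Finset.Iio i := by
      rw [hL, List.toFinset_filter, List.toFinset_finRange]
      ext x; simp
    have hLnd : L.Nodup := hLp.imp ne_of_lt
    -- product over L
    have hLprod : (L.map (fun j => (m j : ℤ))).prod = ∏ j ∈ Finset.Iio i, (m j : ℤ) := by
      rw [← List.prod_toFinset _ hLnd, hLt]
    -- g over L
    have hg : L.foldr (fun j acc => v j + (m j : ℤ) * acc) 0 =
        ∑ k ∈ Finset.Iio i, v k * ∏ j ∈ Finset.Iio k, (m j : ℤ) := by
      rw [garner_g r m v L hLp, hLt]
      refine Finset.sum_congr rfl fun k hk => ?_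
      have hfe : (Finset.Iio i).filter (· < k) = Finset.Iio k := by
        ext x
        simp only [Finset.mem_filter, Finset.mem_Iio]
        exact ⟨fun h => h.2, fun h => ⟨h.trans (Finset.mem_Iio.1 hk), h⟩⟩
      rw [hfe]
    have hfold := garner_fold r m v c i L (u i)
      (fun j hj => hc j i (by
        rw [hL] at hj
        exact (List.mem_filter.1 hj).2 |> of_decide_eq_true))
    rw [hLprod, hg] at hfold
    set F := L.foldl (fun acc j => (acc - v j) * c j i) (u i) with hF
    set g := ∑ k ∈ Finset.Iio i, v k * ∏ j ∈ Finset.Iio k, (m j : ℤ) with hgdef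
    set P := ∏ j ∈ Finset.Iio i, (m j : ℤ) with hP
    -- v i = F % m i
    have hvF : v i = F % (m i : ℤ) := hv i
    have hdvd1 : (m i : ℤ) ∣ v i * P + g - u i := by
      have : v i * P + g - u i =
          (F * P - (u i - g)) - (m i : ℤ) * ((F / (m i : ℤ)) * P) := by
        rw [hvF, Int.emod_def]; ring
      rw [this]
      exact dvd_sub hfold (Dvd.intro _ rfl)
    -- split the sum
    have husplit : (Finset.univ : Finset (Fin r)) =
        insert i (Finset.Iio i) ∪ Finset.Ioi i := by
      ext x
      simp only [Finset.mem_univ, Finset.mem_union, Finset.mem_insert, Finset.mem_Iio,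
        Finset.mem_Ioi, true_iff]
      rcases lt_trichotomy x i with h | h | h
      · exact Or.inl (Or.inr h)
      · exact Or.inl (Or.inl h)
      · exact Or.inr h
    have hdisj : Disjoint (insert i (Finset.Iio i)) (Finset.Ioi i) := by
      simp only [Finset.disjoint_left, Finset.mem_insert, Finset.mem_Iio, Finset.mem_Ioi]
      rintro x (rfl | h) hx
      · exact absurd hx (lt_irrefl _)
      · exact absurd (h.trans hx) (lt_irrefl _)
    have hsum : (∑ k, v k * ∏ j ∈ Finset.Iio k, (m j : ℤ)) =
        (v i * P + g) + ∑ k ∈ Finset.Ioi i, v k * ∏ j ∈ Finset.Iio k, (m j : ℤ) := by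
      rw [husplit, Finset.sum_union hdisj, Finset.sum_insert (by simp)]
    rw [hsum]
    have hdvd2 : (m i : ℤ) ∣ ∑ k ∈ Finset.Ioi i, v k * ∏ j ∈ Finset.Iio k, (m j : ℤ) := by
      refine Finset.dvd_sum fun k hk => ?_
      exact Dvd.dvd.mul_left
        (Finset.dvd_prod_of_mem (fun j => (m j : ℤ)) (Finset.mem_Iio.2 (Finset.mem_Ioi.1 hk))) _
    have : v i * P + g + (∑ k ∈ Finset.Ioi i, v k * ∏ j ∈ Finset.Iio k, (m j : ℤ)) - u i =
        (v i * P + g - u i) + ∑ k ∈ Finset.Ioi i, v k * ∏ j ∈ Finset.Iio k, (m j : ℤ) := by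
      ring
    rw [this]
    exact dvd_add hdvd1 hdvd2
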